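/- arXiv:2401.11130 — 3 statements merged into one kernel-verified Lean document; each statement's English description precedes it below -/
import Mathlib

section
/- Let A and B be integrable real-valued random variables on a probability space (Ω, ℱ, ℙ), with cumulative distribution functions F_A(x) = ℙ(A ≤ x) and F_B(x) = ℙ(B ≤ x). Let g : ℝ → ℝ be differentiable at every point with derivative g' measurable and bounded. Then x ↦ (F_A(x) − F_B(x))·g'(x) is Lebesgue integrable on ℝ and 𝔼[g(B)] − 𝔼[g(A)] = ∫_ℝ (F_A(x) − F_B(x))·g'(x) dx. -/
open MeasureTheory Set

section Aux

variable {g : ℝ → ℝ} {C : ℝ}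

lemma aux_intInt (hmeas : Measurable (deriv g)) (hbd : ∀ x, |deriv g x| ≤ C)
    (a b : ℝ) : IntervalIntegrable (deriv g) volume a b := by
  have hC0 : 0 ≤ C := le_trans (abs_nonneg _) (hbd 0)
  refine (intervalIntegrable_const (c := C)).mono_fun hmeas.aestronglyMeasurable.restrict ?_
  filter_upwards with x
  simpa [Real.norm_eq_abs, abs_of_nonneg hC0] using hbd x

lemma aux_ptwise {a b : ℝ} (hab : a ≤ b) (x : ℝ) :
    ((Ici a).indicator (fun _ => (1:ℝ)) x - (Ici b).indicator (fun _ => (1:ℝ)) x) * deriv g x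
      = (Ico a b).indicator (deriv g) x := by
  by_cases h1 : a ≤ x <;> by_cases h2 : b ≤ x
  · simp [indicator_apply, mem_Ici, mem_Ico, h1, h2, not_lt.2 h2]
  · simp [indicator_apply, mem_Ici, mem_Ico, h1, h2, not_le.1 h2]
  · exact absurd (hab.trans h2) h1
  · simp [indicator_apply, mem_Ici, mem_Ico, h1, h2]

lemma aux_ftc_le (hg : ∀ x, DifferentiableAt ℝ g x) (hmeas : Measurable (deriv g))
    (hbd : ∀ x, |deriv g x| ≤ C) {a b : ℝ} (hab : a ≤ b) :
    (∫ x, ((Ici a).indicator (fun _ => (1:ℝ)) x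
      - (Ici b).indicator (fun _ => (1:ℝ)) x) * deriv g x) = g b - g a := by
  have h1 : (∫ x, ((Ici a).indicator (fun _ => (1:ℝ)) x
      - (Ici b).indicator (fun _ => (1:ℝ)) x) * deriv g x)
      = ∫ x, (Ico a b).indicator (deriv g) x := by
    exact integral_congr_ae (Filter.Eventually.of_forall fun x => aux_ptwise hab x)
  rw [h1, integral_indicator measurableSet_Ico, integral_Ico_eq_integral_Ioo,
    ← integral_Ioc_eq_integral_Ioo, ← intervalIntegral.integral_of_le hab]
  exact intervalIntegral.integral_eq_sub_of_hasDerivAt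
    (fun x _ => (hg x).hasDerivAt) (aux_intInt hmeas hbd a b)

lemma aux_ftc (hg : ∀ x, DifferentiableAt ℝ g x) (hmeas : Measurable (deriv g))
    (hbd : ∀ x, |deriv g x| ≤ C) (a b : ℝ) :
    (∫ x, ((Ici a).indicator (fun _ => (1:ℝ)) x
      - (Ici b).indicator (fun _ => (1:ℝ)) x) * deriv g x) = g b - g a := by
  rcases le_total a b with hab | hab
  · exact aux_ftc_le hg hmeas hbd hab
  · have h1 : (∫ x, ((Ici a).indicator (fun _ => (1:ℝ)) x
        - (Ici b).indicator (fun _ => (1:ℝ)) x) * deriv g x)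
        = - ∫ x, ((Ici b).indicator (fun _ => (1:ℝ)) x
        - (Ici a).indicator (fun _ => (1:ℝ)) x) * deriv g x := by
      rw [← integral_neg]
      exact integral_congr_ae (Filter.Eventually.of_forall fun x => by ring)
    rw [h1, aux_ftc_le hg hmeas hbd hab]
    ring

theorem stmt2_main {Ω : Type*} [MeasurableSpace Ω] (ℙ : Measure Ω) [IsProbabilityMeasure ℙ]
    (A B : Ω → ℝ) (hAm : Measurable A) (hBm : Measurable B)
    (hA : Integrable A ℙ) (hB : Integrable B ℙ)
    (hg : ∀ x, DifferentiableAt ℝ g x)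
    (hmeas : Measurable (deriv g)) (hbd : ∀ x, |deriv g x| ≤ C) :
    Integrable (fun x : ℝ =>
      ((ℙ (A ⁻¹' Set.Iic x)).toReal - (ℙ (B ⁻¹' Set.Iic x)).toReal) * deriv g x) ∧
    (∫ ω, g (B ω) ∂ℙ) - (∫ ω, g (A ω) ∂ℙ) =
      ∫ x : ℝ,
        ((ℙ (A ⁻¹' Set.Iic x)).toReal - (ℙ (B ⁻¹' Set.Iic x)).toReal) * deriv g x := by
  have hC0 : 0 ≤ C := le_trans (abs_nonneg _) (hbd 0)
  set F : Ω × ℝ → ℝ := fun p =>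
    ((Ici (A p.1)).indicator (fun _ => (1:ℝ)) p.2
      - (Ici (B p.1)).indicator (fun _ => (1:ℝ)) p.2) * deriv g p.2 with hF
  -- measurability of F
  have hsA : MeasurableSet {p : Ω × ℝ | A p.1 ≤ p.2} :=
    measurableSet_le (hAm.comp measurable_fst) measurable_snd
  have hsB : MeasurableSet {p : Ω × ℝ | B p.1 ≤ p.2} :=
    measurableSet_le (hBm.comp measurable_fst) measurable_snd
  have hFmeas : Measurable F := by
    have h1 : F = fun p : Ω × ℝ =>
        ((if A p.1 ≤ p.2 then (1:ℝ) else 0) - (if B p.1 ≤ p.2 then (1:ℝ) else 0))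
          * deriv g p.2 := by
      funext p; simp [hF, indicator_apply, mem_Ici]
    rw [h1]
    exact (((measurable_const.ite hsA measurable_const).sub
      (measurable_const.ite hsB measurable_const)).mul (hmeas.comp measurable_snd))
  -- pointwise bound
  have hFbd : ∀ p : Ω × ℝ, ‖F p‖ ≤
      C * (Ico (min (A p.1) (B p.1)) (max (A p.1) (B p.1))).indicator
        (fun _ => (1:ℝ)) p.2 := by
    intro p
    have h1 : |(Ici (A p.1)).indicator (fun _ => (1:ℝ)) p.2
        - (Ici (B p.1)).indicator (fun _ => (1:ℝ)) p.2| ≤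
        (Ico (min (A p.1) (B p.1)) (max (A p.1) (B p.1))).indicator (fun _ => (1:ℝ)) p.2 := by
      have h0 : (0:ℝ) ≤ (Ico (min (A p.1) (B p.1)) (max (A p.1) (B p.1))).indicator
          (fun _ => (1:ℝ)) p.2 := Set.indicator_nonneg (fun _ _ => zero_le_one) _
      by_cases h1 : A p.1 ≤ p.2 <;> by_cases h2 : B p.1 ≤ p.2
      · simpa [indicator_apply, mem_Ici, h1, h2] using h0
      · have hm : p.2 ∈ Ico (min (A p.1) (B p.1)) (max (A p.1) (B p.1)) :=
          ⟨(min_le_left _ _).trans h1, lt_of_lt_of_le (not_le.1 h2) (le_max_right _ _)⟩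
        rw [Set.indicator_of_mem hm]
        simp [indicator_apply, mem_Ici, h1, h2]
      · have hm : p.2 ∈ Ico (min (A p.1) (B p.1)) (max (A p.1) (B p.1)) :=
          ⟨(min_le_right _ _).trans h2, lt_of_lt_of_le (not_le.1 h1) (le_max_left _ _)⟩
        rw [Set.indicator_of_mem hm]
        simp [indicator_apply, mem_Ici, h1, h2]
      · simpa [indicator_apply, mem_Ici, h1, h2] using h0
    calc ‖F p‖ = |(Ici (A p.1)).indicator (fun _ => (1:ℝ)) p.2
          - (Ici (B p.1)).indicator (fun _ => (1:ℝ)) p.2| * |deriv g p.2| := by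
          rw [hF]; simp [Real.norm_eq_abs, abs_mul]
      _ ≤ (Ico (min (A p.1) (B p.1)) (max (A p.1) (B p.1))).indicator
            (fun _ => (1:ℝ)) p.2 * C := by
          exact mul_le_mul h1 (hbd _) (abs_nonneg _)
            (Set.indicator_nonneg (fun _ _ => zero_le_one) _)
      _ = C * (Ico (min (A p.1) (B p.1)) (max (A p.1) (B p.1))).indicator
            (fun _ => (1:ℝ)) p.2 := mul_comm _ _
  -- integrability of the dominating slice functions
  have hGint : ∀ ω : Ω, Integrable
      ((Ico (min (A ω) (B ω)) (max (A ω) (B ω))).indicator (fun _ => (1:ℝ))) volume := by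
    intro ω
    rw [integrable_indicator_iff measurableSet_Ico]
    exact integrableOn_const measure_Ico_lt_top.ne
  have hGval : ∀ ω : Ω, (∫ x, (Ico (min (A ω) (B ω)) (max (A ω) (B ω))).indicator
      (fun _ => (1:ℝ)) x) = |A ω - B ω| := by
    intro ω
    rw [integral_indicator measurableSet_Ico]
    simp [Real.volume_Ico, max_sub_min_eq_abs, ENNReal.toReal_ofReal, abs_nonneg,
      abs_sub_comm]
  -- integrability of F on the product
  have hFint : Integrable F (ℙ.prod volume) := by
    refine (integrable_prod_iff hFmeas.aestronglyMeasurable).2 ⟨?_, ?_⟩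
    · refine Filter.Eventually.of_forall fun ω => ?_
      refine Integrable.mono' ((hGint ω).const_mul C)
        (hFmeas.comp measurable_prodMk_left).aestronglyMeasurable ?_
      exact Filter.Eventually.of_forall fun x => hFbd (ω, x)
    · refine Integrable.mono' ((hA.sub hB).abs.const_mul C)
        (hFmeas.norm.stronglyMeasurable.integral_prod_right').aestronglyMeasurable ?_
      refine Filter.Eventually.of_forall fun ω => ?_
      have h0 : 0 ≤ ∫ x, ‖F (ω, x)‖ := integral_nonneg fun x => norm_nonneg _
      rw [Real.norm_eq_abs, abs_of_nonneg h0]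
      calc (∫ x, ‖F (ω, x)‖)
          ≤ ∫ x, C * (Ico (min (A ω) (B ω)) (max (A ω) (B ω))).indicator
            (fun _ => (1:ℝ)) x := by
            refine integral_mono_of_nonneg (Filter.Eventually.of_forall fun x => norm_nonneg _)
              ((hGint ω).const_mul C) (Filter.Eventually.of_forall fun x => hFbd (ω, x))
        _ = C * |A ω - B ω| := by rw [integral_const_mul, hGval ω]
  -- the x-slices
  have hslice : ∀ x : ℝ, (∫ ω, F (ω, x) ∂ℙ) =
      ((ℙ (A ⁻¹' Set.Iic x)).toReal - (ℙ (B ⁻¹' Set.Iic x)).toReal) * deriv g x := by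
    intro x
    have hiA : (fun ω => (Ici (A ω)).indicator (fun _ => (1:ℝ)) x)
        = (A ⁻¹' Set.Iic x).indicator (fun _ => (1:ℝ)) := by
      funext ω; by_cases h : A ω ≤ x <;>
        simp [indicator_apply, mem_Ici, mem_Iic, Set.mem_preimage, h]
    have hiB : (fun ω => (Ici (B ω)).indicator (fun _ => (1:ℝ)) x)
        = (B ⁻¹' Set.Iic x).indicator (fun _ => (1:ℝ)) := by
      funext ω; by_cases h : B ω ≤ x <;>
        simp [indicator_apply, mem_Ici, mem_Iic, Set.mem_preimage, h]
    have hintA : Integrable ((A ⁻¹' Set.Iic x).indicator (fun _ => (1:ℝ))) ℙ := by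
      rw [integrable_indicator_iff (hAm measurableSet_Iic)]
      exact integrableOn_const (measure_lt_top _ _).ne
    have hintB : Integrable ((B ⁻¹' Set.Iic x).indicator (fun _ => (1:ℝ))) ℙ := by
      rw [integrable_indicator_iff (hBm measurableSet_Iic)]
      exact integrableOn_const (measure_lt_top _ _).ne
    calc (∫ ω, F (ω, x) ∂ℙ)
        = (∫ ω, ((A ⁻¹' Set.Iic x).indicator (fun _ => (1:ℝ)) ω
            - (B ⁻¹' Set.Iic x).indicator (fun _ => (1:ℝ)) ω) ∂ℙ) * deriv g x := by
          rw [← integral_mul_const]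
          refine integral_congr_ae (Filter.Eventually.of_forall fun ω => ?_)
          simp only [hF]
          rw [← hiA, ← hiB]
      _ = ((ℙ (A ⁻¹' Set.Iic x)).toReal - (ℙ (B ⁻¹' Set.Iic x)).toReal) * deriv g x := by
          rw [integral_sub hintA hintB]
          simp [integral_indicator_const, hAm measurableSet_Iic, hBm measurableSet_Iic,
            integral_indicator, Measure.restrict_apply, measureReal_def]
  -- the ω-slices
  have hωslice : ∀ ω : Ω, (∫ x, F (ω, x)) = g (B ω) - g (A ω) :=
    fun ω => aux_ftc hg hmeas hbd (A ω) (B ω)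
  -- integrability of g ∘ A and g ∘ B
  have hgLip : LipschitzWith C.toNNReal g := by
    refine lipschitzWith_of_nnnorm_deriv_le (fun x => (hg x)) fun x => ?_
    rw [← NNReal.coe_le_coe]
    simpa [Real.coe_toNNReal C hC0, Real.norm_eq_abs] using hbd x
  have hgA : Integrable (fun ω => g (A ω)) ℙ := by
    refine Integrable.mono' ((hA.abs.const_mul C).add (integrable_const |g 0|))
      (hgLip.continuous.comp_aestronglyMeasurable hA.1) ?_
    refine Filter.Eventually.of_forall fun ω => ?_
    have := hgLip.dist_le_mul (A ω) 0
    rw [Real.dist_eq, Real.dist_eq] at this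
    simp only [Real.norm_eq_abs, sub_zero] at this ⊢
    calc |g (A ω)| ≤ |g (A ω) - g 0| + |g 0| := by
          have := abs_sub_abs_le_abs_sub (g (A ω)) (g 0); linarith [abs_add_le (g (A ω) - g 0) (g 0)]
      _ ≤ C * |A ω| + |g 0| := by
          have hc : (C.toNNReal : ℝ) = C := Real.coe_toNNReal C hC0
          nlinarith [this, abs_nonneg (A ω)]
  have hgB : Integrable (fun ω => g (B ω)) ℙ := by
    refine Integrable.mono' ((hB.abs.const_mul C).add (integrable_const |g 0|))
      (hgLip.continuous.comp_aestronglyMeasurable hB.1) ?_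
    refine Filter.Eventually.of_forall fun ω => ?_
    have := hgLip.dist_le_mul (B ω) 0
    rw [Real.dist_eq, Real.dist_eq] at this
    simp only [Real.norm_eq_abs, sub_zero] at this ⊢
    calc |g (B ω)| ≤ |g (B ω) - g 0| + |g 0| := by
          have := abs_sub_abs_le_abs_sub (g (B ω)) (g 0); linarith [abs_add_le (g (B ω) - g 0) (g 0)]
      _ ≤ C * |B ω| + |g 0| := by
          have hc : (C.toNNReal : ℝ) = C := Real.coe_toNNReal C hC0
          nlinarith [this, abs_nonneg (B ω)]
  constructor
  · have h1 : Integrable (fun x => ∫ ω, F (ω, x) ∂ℙ) volume := hFint.integral_prod_right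
    exact h1.congr (Filter.Eventually.of_forall fun x => hslice x)
  · have hswap : (∫ ω, (∫ x, F (ω, x)) ∂ℙ) = ∫ x, (∫ ω, F (ω, x) ∂ℙ) :=
      integral_integral_swap (f := fun ω x => F (ω, x)) hFint
    have hlhs : (∫ ω, (∫ x, F (ω, x)) ∂ℙ) = (∫ ω, g (B ω) ∂ℙ) - (∫ ω, g (A ω) ∂ℙ) := by
      rw [show (fun ω => ∫ x, F (ω, x)) = fun ω => g (B ω) - g (A ω) from
        funext fun ω => hωslice ω]
      exact integral_sub hgB hgA
    rw [← hlhs, hswap]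
    exact integral_congr_ae (Filter.Eventually.of_forall fun x => hslice x)

end Aux

/-- If `A`, `B` are integrable random variables with CDFs `F_A`, `F_B` and `g : ℝ → ℝ` is
differentiable everywhere with measurable bounded derivative, then
`x ↦ (F_A x − F_B x) · g' x` is Lebesgue integrable and
`𝔼[g B] − 𝔼[g A] = ∫ (F_A x − F_B x) · g' x dx`. -/
theorem stmt2 {Ω : Type*} [MeasurableSpace Ω] (ℙ : Measure Ω) [IsProbabilityMeasure ℙ]
    (A B : Ω → ℝ) (hA : Integrable A ℙ) (hB : Integrable B ℙ)
    (g : ℝ → ℝ) (hg : ∀ x, DifferentiableAt ℝ g x)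
    (hmeas : Measurable (deriv g)) (C : ℝ) (hbd : ∀ x, |deriv g x| ≤ C) :
    Integrable (fun x : ℝ =>
      ((ℙ (A ⁻¹' Set.Iic x)).toReal - (ℙ (B ⁻¹' Set.Iic x)).toReal) * deriv g x) ∧
    (∫ ω, g (B ω) ∂ℙ) - (∫ ω, g (A ω) ∂ℙ) =
      ∫ x : ℝ,
        ((ℙ (A ⁻¹' Set.Iic x)).toReal - (ℙ (B ⁻¹' Set.Iic x)).toReal) * deriv g x := by
  set A' := hA.1.mk A with hA'
  set B' := hB.1.mk B with hB'
  have hA'm : Measurable A' := hA.1.stronglyMeasurable_mk.measurable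
  have hB'm : Measurable B' := hB.1.stronglyMeasurable_mk.measurable
  have hAeq : A =ᵐ[ℙ] A' := hA.1.ae_eq_mk
  have hBeq : B =ᵐ[ℙ] B' := hB.1.ae_eq_mk
  have hA'int : Integrable A' ℙ := hA.congr hAeq
  have hB'int : Integrable B' ℙ := hB.congr hBeq
  have hFA : ∀ x : ℝ, ℙ (A ⁻¹' Set.Iic x) = ℙ (A' ⁻¹' Set.Iic x) := by
    intro x
    refine measure_congr ?_
    filter_upwards [hAeq] with ω h
    change (A ω ≤ x) = (A' ω ≤ x)
    rw [h]
  have hFB : ∀ x : ℝ, ℙ (B ⁻¹' Set.Iic x) = ℙ (B' ⁻¹' Set.Iic x) := by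
    intro x
    refine measure_congr ?_
    filter_upwards [hBeq] with ω h
    change (B ω ≤ x) = (B' ω ≤ x)
    rw [h]
  have hgA : (∫ ω, g (A ω) ∂ℙ) = ∫ ω, g (A' ω) ∂ℙ :=
    integral_congr_ae (hAeq.mono fun ω h => by show g (A ω) = g (A' ω); rw [h])
  have hgB : (∫ ω, g (B ω) ∂ℙ) = ∫ ω, g (B' ω) ∂ℙ :=
    integral_congr_ae (hBeq.mono fun ω h => by show g (B ω) = g (B' ω); rw [h])
  have main := stmt2_main ℙ A' B' hA'm hB'm hA'int hB'int hg hmeas hbd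
  constructor
  · refine main.1.congr (Filter.Eventually.of_forall fun x => ?_)
    show ((ℙ (A' ⁻¹' Set.Iic x)).toReal - (ℙ (B' ⁻¹' Set.Iic x)).toReal) * deriv g x
      = ((ℙ (A ⁻¹' Set.Iic x)).toReal - (ℙ (B ⁻¹' Set.Iic x)).toReal) * deriv g x
    rw [hFA x, hFB x]
  · rw [hgA, hgB, main.2]
    refine integral_congr_ae (Filter.Eventually.of_forall fun x => ?_)
    show ((ℙ (A' ⁻¹' Set.Iic x)).toReal - (ℙ (B' ⁻¹' Set.Iic x)).toReal) * deriv g x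
      = ((ℙ (A ⁻¹' Set.Iic x)).toReal - (ℙ (B ⁻¹' Set.Iic x)).toReal) * deriv g x
    rw [hFA x, hFB x]
end

section
/- Let (Ω, ℱ, ℙ) be a probability space and let Y : ℝ × Ω → ℝ be jointly measurable such that for every ω ∈ Ω the map x ↦ Y(x, ω) is differentiable with derivative D(x, ω), where D : ℝ × Ω → ℝ is jointly measurable and |D(x, ω)| ≤ C for all x, ω and some constant C. Let A, B : Ω → ℝ be integrable random variables such that for every x ∈ ℝ the random variables ω ↦ 𝟙_{[A(ω),∞)}(x) − 𝟙_{[B(ω),∞)}(x) and ω ↦ D(x, ω) are independent. Then ω ↦ Y(B(ω), ω) − Y(A(ω), ω) is integrable, x ↦ (F_A(x) − F_B(x))·𝔼[D(x, ·)] is Lebesgue integrable on ℝ, and 𝔼[Y(B(·), ·) − Y(A(·), ·)] = ∫_ℝ (F_A(x) − F_B(x))·𝔼[D(x, ·)] dx. -/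
open MeasureTheory Set ProbabilityTheory

/-- Identification equation of Theorem 3.1 (covariate-free form): if the potential outcome
process `Y (x, ω)` is jointly measurable with jointly measurable, uniformly bounded partial
derivative `D (x, ω)`, and for every `x` the indicator difference
`ω ↦ 𝟙_{[A ω,∞)}(x) − 𝟙_{[B ω,∞)}(x)` is independent of `ω ↦ D (x, ω)`, then
`𝔼[Y(B) − Y(A)] = ∫ (F_A(x) − F_B(x)) · 𝔼[D(x,·)] dx`, all quantities being integrable. -/
theorem stmt3 {Ω : Type*} [MeasurableSpace Ω] (μ : Measure Ω) [IsProbabilityMeasure μ]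
    (Y D : ℝ → Ω → ℝ)
    (hYmeas : Measurable (fun p : ℝ × Ω => Y p.1 p.2))
    (hderiv : ∀ ω x, HasDerivAt (fun x => Y x ω) (D x ω) x)
    (hDmeas : Measurable (fun p : ℝ × Ω => D p.1 p.2))
    (C : ℝ) (hbd : ∀ x ω, |D x ω| ≤ C)
    (A B : Ω → ℝ) (hA : Integrable A μ) (hB : Integrable B μ)
    (hindep : ∀ x : ℝ, IndepFun
      (fun ω => Set.indicator (Set.Ici (A ω)) (fun _ => (1 : ℝ)) x
        - Set.indicator (Set.Ici (B ω)) (fun _ => (1 : ℝ)) x)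
      (fun ω => D x ω) μ) :
    Integrable (fun ω => Y (B ω) ω - Y (A ω) ω) μ ∧
    Integrable (fun x : ℝ =>
      ((μ (A ⁻¹' Set.Iic x)).toReal - (μ (B ⁻¹' Set.Iic x)).toReal) * ∫ ω, D x ω ∂μ) ∧
    (∫ ω, (Y (B ω) ω - Y (A ω) ω) ∂μ) =
      ∫ x : ℝ,
        ((μ (A ⁻¹' Set.Iic x)).toReal - (μ (B ⁻¹' Set.Iic x)).toReal) * ∫ ω, D x ω ∂μ := by
  classical
  -- measurable modifications of A and B
  obtain ⟨A', hA'meas, hAeq⟩ : ∃ A' : Ω → ℝ, Measurable A' ∧ A =ᵐ[μ] A' :=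
    ⟨hA.1.aemeasurable.mk A, hA.1.aemeasurable.measurable_mk, hA.1.aemeasurable.ae_eq_mk⟩
  obtain ⟨B', hB'meas, hBeq⟩ : ∃ B' : Ω → ℝ, Measurable B' ∧ B =ᵐ[μ] B' :=
    ⟨hB.1.aemeasurable.mk B, hB.1.aemeasurable.measurable_mk, hB.1.aemeasurable.ae_eq_mk⟩
  have hA' : Integrable A' μ := hA.congr hAeq
  have hB' : Integrable B' μ := hB.congr hBeq
  -- the indicator difference with measurable representatives
  set g : ℝ → Ω → ℝ := fun x ω =>
    (Ici (A' ω)).indicator (fun _ => (1 : ℝ)) x - (Ici (B' ω)).indicator (fun _ => (1 : ℝ)) x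
    with hgdef
  -- sectional measurability of D
  have hDx : ∀ ω, Measurable (fun x => D x ω) := fun ω =>
    hDmeas.comp (measurable_id.prodMk measurable_const)
  have hDω : ∀ x, Measurable (fun ω => D x ω) := fun x =>
    hDmeas.comp (measurable_const.prodMk measurable_id)
  -- the pointwise decomposition of D * g as a difference of indicators
  have hgdec : ∀ x ω, D x ω * g x ω =
      (Ico (A' ω) (B' ω)).indicator (fun y => D y ω) x
        - (Ico (B' ω) (A' ω)).indicator (fun y => D y ω) x := by
    intro x ω
    by_cases h1 : A' ω ≤ x <;> by_cases h2 : B' ω ≤ x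
    · simp [hgdef, Set.indicator_apply, mem_Ico, mem_Ici, h1, h2, not_lt.2 h1, not_lt.2 h2]
    · simp [hgdef, Set.indicator_apply, mem_Ico, mem_Ici, h1, h2, not_lt.2 h1, lt_of_not_ge h2]
    · simp [hgdef, Set.indicator_apply, mem_Ico, mem_Ici, h1, h2, not_lt.2 h2, lt_of_not_ge h1,
        mul_neg_one]
    · simp [hgdef, Set.indicator_apply, mem_Ico, mem_Ici, h1, h2, lt_of_not_ge h1,
        lt_of_not_ge h2]
  -- integrability of D on bounded intervals
  have hDint : ∀ (ω : Ω) (a b : ℝ), IntegrableOn (fun y => D y ω) (Ico a b) volume := by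
    intro ω a b
    have hc : IntegrableOn (fun _ : ℝ => C) (Ico a b) volume :=
      integrableOn_const measure_Ico_lt_top.ne
    refine Integrable.mono' hc ((hDx ω).aestronglyMeasurable.restrict) ?_
    exact Filter.Eventually.of_forall fun y => (Real.norm_eq_abs _).le.trans (hbd y ω)
  -- pointwise fundamental theorem of calculus
  have key : ∀ ω, (∫ x, D x ω * g x ω) = Y (B' ω) ω - Y (A' ω) ω := by
    intro ω
    have h1 := hDint ω (A' ω) (B' ω)
    have h2 := hDint ω (B' ω) (A' ω)
    have h1' : IntegrableOn (fun y => D y ω) (Ioc (A' ω) (B' ω)) volume := by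
      rw [IntegrableOn, ← MeasureTheory.restrict_Ico_eq_restrict_Ioc]; exact h1
    have h2' : IntegrableOn (fun y => D y ω) (Ioc (B' ω) (A' ω)) volume := by
      rw [IntegrableOn, ← MeasureTheory.restrict_Ico_eq_restrict_Ioc]; exact h2
    have e1 : (∫ x, D x ω * g x ω)
        = ∫ x, ((Ico (A' ω) (B' ω)).indicator (fun y => D y ω) x
            - (Ico (B' ω) (A' ω)).indicator (fun y => D y ω) x) := by
      refine integral_congr_ae (Filter.Eventually.of_forall fun x => ?_)
      exact hgdec x ω
    have hii : IntervalIntegrable (fun y => D y ω) volume (A' ω) (B' ω) := ⟨h1', h2'⟩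
    rw [e1, integral_sub ((integrable_indicator_iff measurableSet_Ico).2 h1)
        ((integrable_indicator_iff measurableSet_Ico).2 h2),
      integral_indicator measurableSet_Ico, integral_indicator measurableSet_Ico]
    have e2 : (∫ x in Ico (A' ω) (B' ω), D x ω) - (∫ x in Ico (B' ω) (A' ω), D x ω)
        = ∫ x in (A' ω)..(B' ω), D x ω := by
      rw [intervalIntegral, MeasureTheory.restrict_Ico_eq_restrict_Ioc,
        MeasureTheory.restrict_Ico_eq_restrict_Ioc]
    rw [e2]
    exact intervalIntegral.integral_eq_sub_of_hasDerivAt (fun x _ => hderiv ω x) hii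
  -- joint measurability of g and of the product
  have hgmeas : Measurable (fun p : ℝ × Ω => g p.1 p.2) := by
    have e : (fun p : ℝ × Ω => g p.1 p.2)
        = fun p : ℝ × Ω => (if A' p.2 ≤ p.1 then (1 : ℝ) else 0)
            - (if B' p.2 ≤ p.1 then (1 : ℝ) else 0) := by
      funext p; simp [hgdef, Set.indicator_apply, mem_Ici]
    rw [e]
    exact ((measurable_const.ite
        (measurableSet_le (hA'meas.comp measurable_snd) measurable_fst) measurable_const).sub
      (measurable_const.ite
        (measurableSet_le (hB'meas.comp measurable_snd) measurable_fst) measurable_const))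
  have hFmeas : Measurable (fun p : ℝ × Ω => D p.1 p.2 * g p.1 p.2) := hDmeas.mul hgmeas
  -- integrability on the product space
  have hC0 : 0 ≤ C := by
    obtain ⟨ω⟩ : Nonempty Ω := by
      by_contra h
      rw [not_nonempty_iff] at h
      have := measure_univ (μ := μ)
      simp [Set.eq_empty_of_isEmpty (univ : Set Ω)] at this
    exact (abs_nonneg _).trans (hbd 0 ω)
  have hF : Integrable (fun p : ℝ × Ω => D p.1 p.2 * g p.1 p.2) (volume.prod μ) := by
    refine ⟨hFmeas.aestronglyMeasurable, ?_⟩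
    rw [hasFiniteIntegral_iff_norm]
    rw [lintegral_prod_symm _ (hFmeas.norm.aemeasurable.ennreal_ofReal)]
    have hbound : ∀ ω, (∫⁻ x, ENNReal.ofReal ‖D x ω * g x ω‖)
        ≤ ENNReal.ofReal C * (ENNReal.ofReal (B' ω - A' ω) + ENNReal.ofReal (A' ω - B' ω)) := by
      intro ω
      have hle : ∀ x, ENNReal.ofReal ‖D x ω * g x ω‖
          ≤ (Ico (A' ω) (B' ω) ∪ Ico (B' ω) (A' ω)).indicator
              (fun _ => ENNReal.ofReal C) x := by
        intro x
        by_cases hx : x ∈ Ico (A' ω) (B' ω) ∪ Ico (B' ω) (A' ω)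
        · rw [Set.indicator_of_mem hx]
          refine ENNReal.ofReal_le_ofReal ?_
          rw [Real.norm_eq_abs, abs_mul]
          have hg1 : |g x ω| ≤ 1 := by
            simp only [hgdef, Set.indicator_apply]
            split_ifs <;> norm_num
          calc |D x ω| * |g x ω| ≤ C * 1 :=
                mul_le_mul (hbd x ω) hg1 (abs_nonneg _) hC0
            _ = C := mul_one C
        · rw [Set.indicator_of_notMem hx]
          have hg0 : g x ω = 0 := by
            rcases le_or_gt (A' ω) x with h1 | h1 <;> rcases le_or_gt (B' ω) x with h2 | h2
            · simp [hgdef, Set.indicator_apply, mem_Ici, h1, h2]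
            · exact absurd (mem_union_left _ (mem_Ico.2 ⟨h1, h2⟩)) hx
            · exact absurd (mem_union_right _ (mem_Ico.2 ⟨h2, h1⟩)) hx
            · simp [hgdef, Set.indicator_apply, mem_Ici, not_le.2 h1, not_le.2 h2]
          simp [hg0]
      calc (∫⁻ x, ENNReal.ofReal ‖D x ω * g x ω‖)
          ≤ ∫⁻ x, (Ico (A' ω) (B' ω) ∪ Ico (B' ω) (A' ω)).indicator
              (fun _ => ENNReal.ofReal C) x := lintegral_mono hle
        _ = ENNReal.ofReal C * volume (Ico (A' ω) (B' ω) ∪ Ico (B' ω) (A' ω)) := by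
            rw [lintegral_indicator (measurableSet_Ico.union measurableSet_Ico),
              setLIntegral_const]
        _ ≤ ENNReal.ofReal C * (volume (Ico (A' ω) (B' ω)) + volume (Ico (B' ω) (A' ω))) :=
            mul_le_mul_right (measure_union_le _ _) _
        _ = ENNReal.ofReal C * (ENNReal.ofReal (B' ω - A' ω) + ENNReal.ofReal (A' ω - B' ω)) := by
            rw [Real.volume_Ico, Real.volume_Ico]
    calc (∫⁻ ω, ∫⁻ x, ENNReal.ofReal ‖D x ω * g x ω‖ ∂volume ∂μ)
        ≤ ∫⁻ ω, ENNReal.ofReal C *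
            (ENNReal.ofReal (B' ω - A' ω) + ENNReal.ofReal (A' ω - B' ω)) ∂μ :=
          lintegral_mono hbound
      _ = ENNReal.ofReal C *
            ∫⁻ ω, (ENNReal.ofReal (B' ω - A' ω) + ENNReal.ofReal (A' ω - B' ω)) ∂μ :=
          lintegral_const_mul' _ _ ENNReal.ofReal_ne_top
      _ < ⊤ := by
          refine ENNReal.mul_lt_top ENNReal.ofReal_lt_top ?_
          rw [lintegral_add_left (f := fun ω => ENNReal.ofReal (B' ω - A' ω)) ((hB'meas.sub hA'meas).ennreal_ofReal)]
          have hmono : ∀ f : Ω → ℝ, Integrable f μ →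
              (∫⁻ ω, ENNReal.ofReal (f ω) ∂μ) < ⊤ := by
            intro f hf
            refine lt_of_le_of_lt (lintegral_mono fun ω => ?_) hf.2
            rw [Real.enorm_eq_ofReal_abs]
            exact ENNReal.ofReal_le_ofReal (le_abs_self _)
          have h1 := hmono _ (hB'.sub hA')
          have h2 := hmono _ (hA'.sub hB')
          exact ENNReal.add_lt_top.2 ⟨h1, h2⟩
  -- part 1: integrability of the outcome difference
  have hae : (fun ω => Y (B ω) ω - Y (A ω) ω) =ᵐ[μ] fun ω => ∫ x, D x ω * g x ω := by
    filter_upwards [hAeq, hBeq] with ω h1 h2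
    rw [key ω, h1, h2]
  have hint1 : Integrable (fun ω => Y (B ω) ω - Y (A ω) ω) μ :=
    (hF.integral_prod_right).congr hae.symm
  -- cdf identity
  have hsetA : ∀ x : ℝ, μ (A ⁻¹' Iic x) = μ (A' ⁻¹' Iic x) := by
    intro x
    refine measure_congr (Filter.eventuallyEq_set.2 ?_)
    filter_upwards [hAeq] with ω h
    simp [mem_preimage, mem_Iic, h]
  have hsetB : ∀ x : ℝ, μ (B ⁻¹' Iic x) = μ (B' ⁻¹' Iic x) := by
    intro x
    refine measure_congr (Filter.eventuallyEq_set.2 ?_)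
    filter_upwards [hBeq] with ω h
    simp [mem_preimage, mem_Iic, h]
  -- expectation of g
  have hgbdd : ∀ x ω, ‖g x ω‖ ≤ 2 := by
    intro x ω
    simp only [hgdef, Set.indicator_apply, Real.norm_eq_abs]
    split_ifs <;> norm_num
  have hgInt : ∀ x, Integrable (fun ω => g x ω) μ := by
    intro x
    refine Integrable.mono' (integrable_const 2)
      (hgmeas.comp (measurable_const.prodMk measurable_id)).aestronglyMeasurable
      (Filter.Eventually.of_forall fun ω => hgbdd x ω)
  have hDInt : ∀ x, Integrable (fun ω => D x ω) μ := by
    intro x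
    refine Integrable.mono' (integrable_const C) (hDω x).aestronglyMeasurable
      (Filter.Eventually.of_forall fun ω => (Real.norm_eq_abs _).le.trans (hbd x ω))
  have hEg : ∀ x : ℝ, (∫ ω, g x ω ∂μ)
      = (μ (A ⁻¹' Iic x)).toReal - (μ (B ⁻¹' Iic x)).toReal := by
    intro x
    have e1 : (fun ω => (Ici (A' ω)).indicator (fun _ => (1 : ℝ)) x)
        = (A' ⁻¹' Iic x).indicator (fun _ => (1 : ℝ)) := by
      funext ω
      by_cases h : A' ω ≤ x <;> simp [Set.indicator_apply, mem_Ici, mem_preimage, mem_Iic, h]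
    have e2 : (fun ω => (Ici (B' ω)).indicator (fun _ => (1 : ℝ)) x)
        = (B' ⁻¹' Iic x).indicator (fun _ => (1 : ℝ)) := by
      funext ω
      by_cases h : B' ω ≤ x <;> simp [Set.indicator_apply, mem_Ici, mem_preimage, mem_Iic, h]
    have i1 : Integrable ((A' ⁻¹' Iic x).indicator (fun _ => (1 : ℝ))) μ :=
      (integrable_const (1 : ℝ)).indicator (hA'meas measurableSet_Iic)
    have i2 : Integrable ((B' ⁻¹' Iic x).indicator (fun _ => (1 : ℝ))) μ :=
      (integrable_const (1 : ℝ)).indicator (hB'meas measurableSet_Iic)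
    calc (∫ ω, g x ω ∂μ)
        = ∫ ω, ((A' ⁻¹' Iic x).indicator (fun _ => (1 : ℝ)) ω
            - (B' ⁻¹' Iic x).indicator (fun _ => (1 : ℝ)) ω) ∂μ := by
          simp only [hgdef]; rw [← e1, ← e2]
      _ = (∫ ω, (A' ⁻¹' Iic x).indicator (fun _ => (1 : ℝ)) ω ∂μ)
            - ∫ ω, (B' ⁻¹' Iic x).indicator (fun _ => (1 : ℝ)) ω ∂μ := integral_sub i1 i2
      _ = (μ (A' ⁻¹' Iic x)).toReal - (μ (B' ⁻¹' Iic x)).toReal := by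
          rw [integral_indicator_const (1 : ℝ) (hA'meas measurableSet_Iic),
            integral_indicator_const (1 : ℝ) (hB'meas measurableSet_Iic)]
          simp [measureReal_def]
      _ = (μ (A ⁻¹' Iic x)).toReal - (μ (B ⁻¹' Iic x)).toReal := by
          rw [hsetA, hsetB]
  -- per-x identity using independence
  have hmul : ∀ x : ℝ, (∫ ω, D x ω * g x ω ∂μ)
      = ((μ (A ⁻¹' Iic x)).toReal - (μ (B ⁻¹' Iic x)).toReal) * ∫ ω, D x ω ∂μ := by
    intro x
    have hi : IndepFun (fun ω => g x ω) (fun ω => D x ω) μ := by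
      refine IndepFun.congr (hindep x) ?_ (Filter.EventuallyEq.rfl)
      filter_upwards [hAeq, hBeq] with ω h1 h2
      simp [hgdef, h1, h2]
    have := IndepFun.integral_mul_eq_mul_integral hi (hgInt x).1 (hDInt x).1
    have e : (∫ ω, D x ω * g x ω ∂μ)
        = ∫ ω, ((fun ω => g x ω) * fun ω => D x ω) ω ∂μ := by
      refine integral_congr_ae (Filter.Eventually.of_forall fun ω => ?_)
      simp [mul_comm]
    rw [e, this, hEg x]
  -- part 2
  have hint2 : Integrable (fun x : ℝ =>
      ((μ (A ⁻¹' Iic x)).toReal - (μ (B ⁻¹' Iic x)).toReal) * ∫ ω, D x ω ∂μ) volume := by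
    have := hF.integral_prod_left
    refine this.congr (Filter.Eventually.of_forall fun x => ?_)
    exact hmul x
  refine ⟨hint1, hint2, ?_⟩
  -- part 3
  calc (∫ ω, (Y (B ω) ω - Y (A ω) ω) ∂μ)
      = ∫ ω, ∫ x, D x ω * g x ω ∂volume ∂μ := integral_congr_ae hae
    _ = ∫ x, ∫ ω, D x ω * g x ω ∂μ ∂volume := (integral_integral_swap hF).symm
    _ = ∫ x : ℝ, ((μ (A ⁻¹' Iic x)).toReal - (μ (B ⁻¹' Iic x)).toReal) * ∫ ω, D x ω ∂μ :=
        integral_congr_ae (Filter.Eventually.of_forall fun x => hmul x)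
end

section
/- Let (Ω, ℱ, ℙ) be a probability space and (Θ, d) a nonempty compact metric space. Let Q_n : Ω → (Θ → ℝ) be a sequence of random functions and Q : Θ → ℝ a function such that: (i) for each n and θ, ω ↦ Q_n(ω)(θ) is measurable; (ii) there exist v > 0 and measurable B_n : Ω → ℝ≥0 with |Q_n(ω)(θ) − Q_n(ω)(θ')| ≤ B_n(ω)·d(θ, θ')^v for all ω, n, θ, θ'; (iii) the sequence B_n is bounded in probability, i.e. for every ε > 0 there exists M > 0 with ℙ(B_n > M) ≤ ε for all n; (iv) for each θ ∈ Θ, Q_n(·)(θ) converges to the constant Q(θ) in probability, i.e. for every δ > 0, ℙ(|Q_n(θ) − Q(θ)| > δ) → 0 as n → ∞. Then Q is continuous on Θ, and sup_{θ ∈ Θ} |Q_n(ω)(θ) − Q(θ)| converges to 0 in probability, i.e. for every δ > 0, ℙ(sup_{θ ∈ Θ} |Q_n(θ) − Q(θ)| > δ) → 0 as n → ∞. -/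
open MeasureTheory Filter

/-- Uniform convergence lemma (Newey–Powell, Lemma B.1): on a nonempty compact metric space
`Θ`, if the random criterion functions `Qn n ω` are measurable in `ω`, satisfy a stochastic
Hölder condition with exponent `v > 0` and coefficients `B n` bounded in probability, and
converge pointwise in probability to `Q`, then `Q` is continuous and
`sup_θ |Qn n ω θ − Q θ| → 0` in probability. -/
theorem stmt11 {Ω : Type*} [MeasurableSpace Ω] (ℙ : Measure Ω) [IsProbabilityMeasure ℙ]
    {Θ : Type*} [MetricSpace Θ] [CompactSpace Θ] [Nonempty Θ]
    (Qn : ℕ → Ω → Θ → ℝ) (Q : Θ → ℝ)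
    (hmeas : ∀ n θ, Measurable (fun ω => Qn n ω θ))
    (v : ℝ) (hv : 0 < v)
    (B : ℕ → Ω → ℝ) (hBmeas : ∀ n, Measurable (B n)) (hBnonneg : ∀ n ω, 0 ≤ B n ω)
    (hHolder : ∀ n ω θ θ', |Qn n ω θ - Qn n ω θ'| ≤ B n ω * dist θ θ' ^ v)
    (hBop : ∀ ε : ℝ, 0 < ε → ∃ M : ℝ, 0 < M ∧
      ∀ n, ℙ {ω | M < B n ω} ≤ ENNReal.ofReal ε)
    (hptwise : ∀ θ : Θ, ∀ δ : ℝ, 0 < δ →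
      Tendsto (fun n => ℙ {ω | δ < |Qn n ω θ - Q θ|}) atTop (nhds 0)) :
    Continuous Q ∧
    ∀ δ : ℝ, 0 < δ →
      Tendsto (fun n => ℙ {ω | δ < ⨆ θ : Θ, |Qn n ω θ - Q θ|}) atTop (nhds 0) := by
  -- Key lemma: a Hölder-type bound for the limit `Q`.
  have hA : ∀ ε : ℝ, 0 < ε → ∃ M : ℝ, 0 < M ∧
      ∀ θ θ' : Θ, |Q θ - Q θ'| ≤ ε + M * dist θ θ' ^ v := by
    intro ε hε
    obtain ⟨M, hM, hMn⟩ := hBop (1/4) (by norm_num)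
    refine ⟨M, hM, fun θ θ' => ?_⟩
    have hpos : (0:ENNReal) < ENNReal.ofReal (1/4) := ENNReal.ofReal_pos.2 (by norm_num)
    have h1 := (hptwise θ (ε/2) (by linarith)).eventually_lt_const hpos
    have h2 := (hptwise θ' (ε/2) (by linarith)).eventually_lt_const hpos
    obtain ⟨n, hn1, hn2⟩ := (h1.and h2).exists
    set S : Set Ω := {ω | M < B n ω} ∪
      ({ω | ε/2 < |Qn n ω θ - Q θ|} ∪ {ω | ε/2 < |Qn n ω θ' - Q θ'|}) with hSdef
    have hS : ℙ S < 1 := by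
      have hb : ℙ S ≤ ENNReal.ofReal (1/4) +
          (ENNReal.ofReal (1/4) + ENNReal.ofReal (1/4)) := by
        refine le_trans (measure_union_le _ _) ?_
        refine add_le_add (hMn n) (le_trans (measure_union_le _ _) ?_)
        exact add_le_add hn1.le hn2.le
      refine lt_of_le_of_lt hb ?_
      rw [← ENNReal.ofReal_add (by norm_num) (by norm_num),
        ← ENNReal.ofReal_add (by norm_num) (by norm_num), ← ENNReal.ofReal_one]
      exact (ENNReal.ofReal_lt_ofReal_iff (by norm_num)).2 (by norm_num)
    have hne : S ≠ Set.univ := by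
      intro h
      rw [h, measure_univ] at hS
      exact lt_irrefl _ hS
    obtain ⟨ω, hω⟩ := (Set.ne_univ_iff_exists_notMem S).1 hne
    simp only [hSdef, Set.mem_union, Set.mem_setOf_eq, not_or, not_lt] at hω
    obtain ⟨hωB, hωθ, hωθ'⟩ := hω
    have hd : (0:ℝ) ≤ dist θ θ' ^ v := Real.rpow_nonneg dist_nonneg v
    have t1 : |Q θ - Qn n ω θ| ≤ ε/2 := by rw [abs_sub_comm]; exact hωθ
    have t2 : |Qn n ω θ - Qn n ω θ'| ≤ M * dist θ θ' ^ v :=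
      le_trans (hHolder n ω θ θ') (mul_le_mul_of_nonneg_right hωB hd)
    calc |Q θ - Q θ'| ≤ |Q θ - Qn n ω θ| + |Qn n ω θ - Q θ'| := abs_sub_le _ _ _
      _ ≤ |Q θ - Qn n ω θ| + (|Qn n ω θ - Qn n ω θ'| + |Qn n ω θ' - Q θ'|) := by
          gcongr; exact abs_sub_le _ _ _
      _ ≤ ε/2 + (M * dist θ θ' ^ v + ε/2) := by gcongr
      _ = ε + M * dist θ θ' ^ v := by ring
  -- Continuity of Q
  have hQcont : Continuous Q := by
    rw [Metric.continuous_iff]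
    intro b ε hε
    obtain ⟨M, hM, hA'⟩ := hA (ε/2) (by linarith)
    refine ⟨(ε/(2*M)) ^ v⁻¹, Real.rpow_pos_of_pos (by positivity) _, fun a hab => ?_⟩
    have hda : dist a b ^ v < ε/(2*M) := by
      have := Real.rpow_lt_rpow dist_nonneg hab hv
      rwa [Real.rpow_inv_rpow (by positivity) hv.ne'] at this
    calc dist (Q a) (Q b) = |Q a - Q b| := Real.dist_eq _ _
      _ ≤ ε/2 + M * dist a b ^ v := hA' a b
      _ < ε/2 + M * (ε/(2*M)) := by gcongr
      _ = ε := by field_simp; ring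
  refine ⟨hQcont, fun δ hδ => ?_⟩
  rw [ENNReal.tendsto_atTop_zero]
  intro ε hε
  obtain ⟨r, hr, hrε⟩ : ∃ r : ℝ, 0 < r ∧ ENNReal.ofReal r ≤ ε := by
    rcases eq_or_ne ε ⊤ with h | h
    · exact ⟨1, one_pos, h ▸ le_top⟩
    · exact ⟨ε.toReal, ENNReal.toReal_pos hε.ne' h, by rw [ENNReal.ofReal_toReal h]⟩
  obtain ⟨M, hM, hMn⟩ := hBop (r/2) (by linarith)
  obtain ⟨MQ, hMQ, hAQ⟩ := hA (δ/4) (by linarith)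
  set η : ℝ := min ((δ/(8*M)) ^ v⁻¹) ((δ/(8*MQ)) ^ v⁻¹) with hηdef
  have hηpos : 0 < η := lt_min (Real.rpow_pos_of_pos (by positivity) _)
    (Real.rpow_pos_of_pos (by positivity) _)
  have hη1 : M * η ^ v ≤ δ/8 := by
    have h1 : η ^ v ≤ δ/(8*M) := by
      have := Real.rpow_le_rpow hηpos.le (min_le_left _ _) hv.le
      rwa [Real.rpow_inv_rpow (by positivity) hv.ne'] at this
    calc M * η ^ v ≤ M * (δ/(8*M)) := by gcongr
      _ = δ/8 := by field_simp
  have hη2 : MQ * η ^ v ≤ δ/8 := by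
    have h1 : η ^ v ≤ δ/(8*MQ) := by
      have := Real.rpow_le_rpow hηpos.le (min_le_right _ _) hv.le
      rwa [Real.rpow_inv_rpow (by positivity) hv.ne'] at this
    calc MQ * η ^ v ≤ MQ * (δ/(8*MQ)) := by gcongr
      _ = δ/8 := by field_simp
  obtain ⟨t0, -, ht0fin, ht0cover⟩ := (isCompact_univ : IsCompact (Set.univ : Set Θ)).finite_cover_balls (e := η) hηpos
  set t : Finset Θ := ht0fin.toFinset with htdef
  -- subset claim
  have hsub : ∀ n, {ω | δ < ⨆ θ : Θ, |Qn n ω θ - Q θ|} ⊆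
      {ω | M < B n ω} ∪ ⋃ θi ∈ t, {ω | δ/4 < |Qn n ω θi - Q θi|} := by
    intro n ω hωmem
    by_contra hωnot
    simp only [Set.mem_union, Set.mem_iUnion, Set.mem_setOf_eq, not_or, not_exists,
      not_lt, exists_prop] at hωnot
    obtain ⟨hωB, hωpt⟩ := hωnot
    have hbound : ∀ θ : Θ, |Qn n ω θ - Q θ| ≤ δ := by
      intro θ
      obtain ⟨θi, hθit, hθiball⟩ := Set.mem_iUnion₂.1 (ht0cover (Set.mem_univ θ))
      have hθit' : θi ∈ t := ht0fin.mem_toFinset.2 hθit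
      have hdθ : dist θ θi < η := Metric.mem_ball.1 hθiball
      have hdv : dist θ θi ^ v ≤ η ^ v := Real.rpow_le_rpow dist_nonneg hdθ.le hv.le
      have hdv0 : (0:ℝ) ≤ dist θ θi ^ v := Real.rpow_nonneg dist_nonneg v
      have e1 : |Qn n ω θ - Qn n ω θi| ≤ M * η ^ v :=
        le_trans (hHolder n ω θ θi)
          (mul_le_mul hωB hdv hdv0 hM.le)
      have e2 : |Qn n ω θi - Q θi| ≤ δ/4 := not_lt.1 (fun h => hωpt θi ⟨hθit', h⟩)
      have e3 : |Q θi - Q θ| ≤ δ/4 + MQ * η ^ v := by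
        have := hAQ θi θ
        rw [dist_comm θi θ] at this
        refine le_trans this ?_
        gcongr
      calc |Qn n ω θ - Q θ| ≤ |Qn n ω θ - Qn n ω θi| + |Qn n ω θi - Q θ| := abs_sub_le _ _ _
        _ ≤ |Qn n ω θ - Qn n ω θi| + (|Qn n ω θi - Q θi| + |Q θi - Q θ|) := by
            gcongr; exact abs_sub_le _ _ _
        _ ≤ M * η ^ v + (δ/4 + (δ/4 + MQ * η ^ v)) := by gcongr
        _ ≤ δ/8 + (δ/4 + (δ/4 + δ/8)) := by gcongr
        _ ≤ δ := by linarith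
    have : (⨆ θ : Θ, |Qn n ω θ - Q θ|) ≤ δ := ciSup_le hbound
    exact absurd hωmem (by simpa using not_lt.2 this)
  -- the finite sum of pointwise probabilities tends to 0
  have hsum : Tendsto (fun n => ∑ θi ∈ t, ℙ {ω | δ/4 < |Qn n ω θi - Q θi|})
      atTop (nhds 0) := by
    have := tendsto_finset_sum t (fun θi _ => hptwise θi (δ/4) (by linarith))
    simpa using this
  have hhalf : (0:ENNReal) < ENNReal.ofReal (r/2) := ENNReal.ofReal_pos.2 (by linarith)
  obtain ⟨N, hN⟩ := eventually_atTop.1 (hsum.eventually_lt_const hhalf)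
  refine ⟨N, fun n hn => ?_⟩
  calc ℙ {ω | δ < ⨆ θ : Θ, |Qn n ω θ - Q θ|}
      ≤ ℙ ({ω | M < B n ω} ∪ ⋃ θi ∈ t, {ω | δ/4 < |Qn n ω θi - Q θi|}) :=
        measure_mono (hsub n)
    _ ≤ ℙ {ω | M < B n ω} + ℙ (⋃ θi ∈ t, {ω | δ/4 < |Qn n ω θi - Q θi|}) :=
        measure_union_le _ _
    _ ≤ ENNReal.ofReal (r/2) + ∑ θi ∈ t, ℙ {ω | δ/4 < |Qn n ω θi - Q θi|} := by
        gcongr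
        · exact hMn n
        · exact measure_biUnion_finset_le _ _
    _ ≤ ENNReal.ofReal (r/2) + ENNReal.ofReal (r/2) := by
        gcongr
        exact (hN n hn).le
    _ = ENNReal.ofReal r := by
        rw [← ENNReal.ofReal_add (by linarith) (by linarith)]
        norm_num
    _ ≤ ε := hrε
end
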